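/- arXiv:1806.10500 — 2 statements merged into one kernel-verified Lean document; each statement's English description precedes it below -/
import Mathlib

section
/- The disjoint union K_5 + K_5 of two complete graphs on 5 vertices has product irregularity strength 3. -/
open Finset

open scoped Classical in
/-- The product degree of vertex `v`: the product of the labels of the edges incident with `v`. -/
noncomputable def pdeg {V : Type*} [Fintype V] (G : SimpleGraph V) (w : Sym2 V → ℕ) (v : V) : ℕ :=
  ∏ u ∈ Finset.univ.filter (fun u => G.Adj v u), w s(v, u)

/-- A labelling is product-irregular if distinct vertices have distinct product degrees. -/
def ProductIrregular {V : Type*} [Fintype V] (G : SimpleGraph V) (w : Sym2 V → ℕ) : Prop :=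
  Function.Injective (pdeg G w)

/-- The product irregularity strength: the least `s` admitting a product-irregular labelling
with labels in `{1,…,s}`. -/
noncomputable def ps {V : Type*} [Fintype V] (G : SimpleGraph V) : ℕ :=
  sInf {s : ℕ | ∃ w : Sym2 V → ℕ,
    (∀ u v : V, G.Adj u v → w s(u, v) ∈ Finset.Icc 1 s) ∧ ProductIrregular G w}
/-- The disjoint union `K_n + K_m` of two complete graphs. -/
def cliquePair (n m : ℕ) : SimpleGraph (Fin n ⊕ Fin m) where
  Adj a b := a ≠ b ∧ a.isLeft = b.isLeft
  symm := ⟨fun a b h => ⟨h.1.symm, h.2.symm⟩⟩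
  loopless := ⟨fun a h => h.1 rfl⟩

/-- Adding a single edge joining `u` and `v`. -/
def addEdge {V : Type*} (G : SimpleGraph V) (u v : V) : SimpleGraph V :=
  G ⊔ SimpleGraph.fromEdgeSet {s(u, v)}


instance : DecidableRel (cliquePair 5 5).Adj :=
  fun a b => inferInstanceAs (Decidable (a ≠ b ∧ a.isLeft = b.isLeft))

def labA : Fin 5 → Fin 5 → ℕ :=
  ![![1,1,1,1,1],![1,1,1,1,2],![1,1,1,2,2],![1,1,2,1,3],![1,2,2,3,1]]

def labB : Fin 5 → Fin 5 → ℕ :=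
  ![![1,1,1,3,3],![1,1,3,2,3],![1,3,1,3,3],![3,2,3,1,2],![3,3,3,2,1]]

def f : (Fin 5 ⊕ Fin 5) → (Fin 5 ⊕ Fin 5) → ℕ
  | .inl i, .inl j => labA i j
  | .inr i, .inr j => labB i j
  | _, _ => 1

lemma f_symm : ∀ a b, f a b = f b a := by decide

def w0 : Sym2 (Fin 5 ⊕ Fin 5) → ℕ := Sym2.lift ⟨f, f_symm⟩

lemma pdeg_eq {V : Type*} [Fintype V] (G : SimpleGraph V) [DecidableRel G.Adj]
    (w : Sym2 V → ℕ) (v : V) :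
    pdeg G w v = ∏ u ∈ Finset.univ.filter (fun u => G.Adj v u), w s(v, u) := by
  unfold pdeg
  congr!

lemma deg4 : ∀ v : Fin 5 ⊕ Fin 5,
    (Finset.univ.filter (fun u => (cliquePair 5 5).Adj v u)).card = 4 := by decide

lemma pdeg_w0_eq : pdeg (cliquePair 5 5) w0 =
    fun v => ∏ u ∈ Finset.univ.filter (fun u => (cliquePair 5 5).Adj v u), w0 s(v, u) :=
  funext fun v => pdeg_eq _ _ _

lemma w0_inj : Function.Injective
    (fun v => ∏ u ∈ Finset.univ.filter (fun u => (cliquePair 5 5).Adj v u), w0 s(v, u)) := by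
  decide

lemma w0_mem : ∀ u v : Fin 5 ⊕ Fin 5, (cliquePair 5 5).Adj u v → w0 s(u, v) ∈ Finset.Icc 1 3 := by
  decide

/-- The disjoint union `K_5 + K_5` has product irregularity strength `3`. -/
theorem stmt_8 : ps (cliquePair 5 5) = 3 := by
  have hmem : 3 ∈ {s : ℕ | ∃ w : Sym2 (Fin 5 ⊕ Fin 5) → ℕ,
      (∀ u v, (cliquePair 5 5).Adj u v → w s(u, v) ∈ Finset.Icc 1 s) ∧
      ProductIrregular (cliquePair 5 5) w} := by
    refine ⟨w0, w0_mem, ?_⟩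
    unfold ProductIrregular
    rw [pdeg_w0_eq]
    exact w0_inj
  have hlb : ∀ s ∈ {s : ℕ | ∃ w : Sym2 (Fin 5 ⊕ Fin 5) → ℕ,
      (∀ u v, (cliquePair 5 5).Adj u v → w s(u, v) ∈ Finset.Icc 1 s) ∧
      ProductIrregular (cliquePair 5 5) w}, 3 ≤ s := by
    rintro s ⟨w, hw, hinj⟩
    by_contra h
    push_neg at h
    have hs2 : s ≤ 2 := by omega
    have hdvd : ∀ v : Fin 5 ⊕ Fin 5, pdeg (cliquePair 5 5) w v ∈ Nat.divisors 16 := by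
      intro v
      rw [Nat.mem_divisors]
      refine ⟨?_, by norm_num⟩
      rw [pdeg_eq]
      have h16 : (16 : ℕ) =
          ∏ _u ∈ Finset.univ.filter (fun u => (cliquePair 5 5).Adj v u), 2 := by
        rw [Finset.prod_const, deg4 v]; norm_num
      rw [h16]
      apply Finset.prod_dvd_prod_of_dvd
      intro u hu
      have hadj : (cliquePair 5 5).Adj v u := (Finset.mem_filter.mp hu).2
      have := hw v u hadj
      rw [Finset.mem_Icc] at this
      obtain ⟨h1, h2⟩ := this
      have h2' : w s(v, u) ≤ 2 := le_trans h2 hs2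
      interval_cases (w s(v, u)) <;> norm_num
    have hcard := Finset.card_le_card_of_injOn (s := (Finset.univ : Finset (Fin 5 ⊕ Fin 5))) (pdeg (cliquePair 5 5) w)
      (fun v _ => hdvd v) hinj.injOn
    rw [Finset.card_univ] at hcard
    have c1 : Fintype.card (Fin 5 ⊕ Fin 5) = 10 := by simp
    have c2 : (Nat.divisors 16).card = 5 := by decide
    omega
  exact le_antisymm (Nat.sInf_le hmem) (le_csInf ⟨3, hmem⟩ hlb)
end

section
/- Set A_n = M_n(1,2,3) and C_m = M_m(3,1,2). For every n ≥ 7 and m ≥ 4, the direct sum A_n ⊕ C_m is product-irregular. -/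
/-- The matrix `M_n(x,y,z)` (1-based indices translated to `Fin n`): zero diagonal,
`x` when `j ≤ n - i + 1` (and `i ≠ j`), `z` at positions `(k,n)` and `(n,k)` where
`k = ⌈n/2⌉ + 1`, and `y` otherwise. -/
def Mmat (n x y z : ℕ) : Matrix (Fin n) (Fin n) ℕ := fun i j =>
  if i = j then 0
  else if (j : ℕ) + 1 ≤ n - (i : ℕ) then x
  else if (((i : ℕ) + 1 = (n + 1) / 2 + 1 ∧ (j : ℕ) + 1 = n) ∨
           ((i : ℕ) + 1 = n ∧ (j : ℕ) + 1 = (n + 1) / 2 + 1)) then z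
  else y

/-- Product of the nonzero entries of row `i`. -/
def rowProd {ι : Type*} [Fintype ι] [DecidableEq ι] (M : Matrix ι ι ℕ) (i : ι) : ℕ :=
  ∏ j ∈ Finset.univ.filter (fun j => M i j ≠ 0), M i j

/-- A square matrix is product-irregular if distinct rows have distinct products of
nonzero entries. -/
def MatPI {ι : Type*} [Fintype ι] [DecidableEq ι] (M : Matrix ι ι ℕ) : Prop :=
  Function.Injective (rowProd M)

/- Auxiliary machinery -/

lemma pow23 {a b c d : ℕ} (h : 2^a * 3^b = 2^c * 3^d) : a = c ∧ b = d := by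
  have h2 := congrArg (Nat.factorization · 2) h
  have h3 := congrArg (Nat.factorization · 3) h
  simp [Nat.factorization_mul, pow_ne_zero, Nat.Prime.factorization_pow,
    Finsupp.single_apply, Nat.prime_two, Nat.prime_three] at h2 h3
  exact ⟨h2, h3⟩

lemma rowProd_inl {n m : ℕ} (A : Matrix (Fin n) (Fin n) ℕ) (C : Matrix (Fin m) (Fin m) ℕ)
    (i : Fin n) :
    rowProd (Matrix.fromBlocks A 0 0 C) (Sum.inl i) = rowProd A i := by
  unfold rowProd
  rw [Finset.prod_filter, Finset.prod_filter, Fintype.prod_sum_type]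
  simp [Matrix.fromBlocks]
  exact Finset.prod_congr rfl (fun x _ => by split_ifs <;> simp_all)

lemma rowProd_inr {n m : ℕ} (A : Matrix (Fin n) (Fin n) ℕ) (C : Matrix (Fin m) (Fin m) ℕ)
    (i : Fin m) :
    rowProd (Matrix.fromBlocks A 0 0 C) (Sum.inr i) = rowProd C i := by
  unfold rowProd
  rw [Finset.prod_filter, Finset.prod_filter, Fintype.prod_sum_type]
  simp [Matrix.fromBlocks]
  exact Finset.prod_congr rfl (fun x _ => by split_ifs <;> simp_all)

/-- Row entries of `Mmat n 1 2 3`, with the zero diagonal replaced by `1`. -/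
def fA (n iv j : ℕ) : ℕ :=
  if iv = j then 1
  else if j + 1 ≤ n - iv then 1
  else if ((iv + 1 = (n + 1) / 2 + 1 ∧ j + 1 = n) ∨
           (iv + 1 = n ∧ j + 1 = (n + 1) / 2 + 1)) then 3
  else 2

/-- Exponent of `2` in the row product of row `iv` of `Mmat n 1 2 3`. -/
def expA (n iv : ℕ) : ℕ :=
  if iv = (n+1)/2 then (n+1)/2 - 2
  else if iv = n-1 then n-3
  else if iv < (n+1)/2 then iv else iv - 1

/-- Exponent of `3` in the row product of row `iv` of `Mmat n 1 2 3`. -/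
def depA (n iv : ℕ) : ℕ := if iv = (n+1)/2 ∨ iv = n-1 then 1 else 0

/-- Row entries of `Mmat m 3 1 2`, with the zero diagonal replaced by `1`. -/
def fC (m iv j : ℕ) : ℕ :=
  if iv = j then 1
  else if j + 1 ≤ m - iv then 3
  else if ((iv + 1 = (m + 1) / 2 + 1 ∧ j + 1 = m) ∨
           (iv + 1 = m ∧ j + 1 = (m + 1) / 2 + 1)) then 2
  else 1

/-- Exponent of `3` in the row product of row `iv` of `Mmat m 3 1 2`. -/
def expC (m iv : ℕ) : ℕ := if iv < (m+1)/2 then m-1-iv else m-iv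

/-- Exponent of `2` in the row product of row `iv` of `Mmat m 3 1 2`. -/
def depC (m iv : ℕ) : ℕ := if iv = (m+1)/2 ∨ iv = m-1 then 1 else 0

lemma prod_const_of' (s : Finset ℕ) (f : ℕ → ℕ) (c : ℕ) (h : ∀ j ∈ s, f j = c) :
    ∏ j ∈ s, f j = c ^ s.card := by
  rw [Finset.prod_congr rfl h, Finset.prod_const]

set_option linter.unnecessarySeqFocus false in
lemma prod_A (n : ℕ) (hn : 7 ≤ n) (i : Fin n) :
    rowProd (Mmat n 1 2 3) i = 2 ^ expA n (i:ℕ) * 3 ^ depA n (i:ℕ) := by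
  have hi : (i:ℕ) < n := i.isLt
  rw [rowProd, Finset.prod_filter]
  have key : ∀ j : Fin n, (if Mmat n 1 2 3 i j ≠ 0 then Mmat n 1 2 3 i j else 1)
      = fA n (i:ℕ) (j:ℕ) := by
    intro j
    simp only [Mmat, fA, Fin.ext_iff]
    split_ifs <;> omega
  simp only [key]
  rw [Fin.prod_univ_eq_prod_range (fA n (i:ℕ)) n, Finset.range_eq_Ico,
    ← Finset.prod_Ico_consecutive _ (Nat.zero_le (n - (i:ℕ))) (Nat.sub_le n (i:ℕ))]
  have h1 : ∏ j ∈ Finset.Ico 0 (n - (i:ℕ)), fA n (i:ℕ) j = 1 := by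
    apply Finset.prod_eq_one
    intro j hj
    simp only [Finset.mem_Ico] at hj
    simp only [fA, eq_self_iff_true, and_true, true_and, or_true, true_or]
    split_ifs <;> omega
  rw [h1, one_mul]
  set iv := (i : ℕ) with hiv
  set i0 := (n+1)/2 with hi0
  have hi0n : i0 < n - 1 := by omega
  rcases eq_or_ne iv i0 with hc | hc
  · -- row i0 : 3 * 2^(i0-2)
    have hm1 : n - 1 ∈ Finset.Ico (n - iv) n := by simp [Finset.mem_Ico]; omega
    rw [← Finset.mul_prod_erase _ _ hm1]
    have hm2 : iv ∈ (Finset.Ico (n - iv) n).erase (n-1) := by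
      simp [Finset.mem_erase, Finset.mem_Ico]; omega
    rw [← Finset.mul_prod_erase _ _ hm2]
    have h2 : ∏ j ∈ ((Finset.Ico (n - iv) n).erase (n-1)).erase iv, fA n iv j
        = 2 ^ ((((Finset.Ico (n - iv) n).erase (n-1)).erase iv).card) := by
      apply prod_const_of'
      intro j hj
      simp only [Finset.mem_erase, Finset.mem_Ico] at hj
      simp only [fA, eq_self_iff_true, and_true, true_and, or_true, true_or]
      split_ifs <;> omega
    rw [h2, Finset.card_erase_of_mem hm2, Finset.card_erase_of_mem hm1, Nat.card_Ico]
    have hf1 : fA n iv (n-1) = 3 := by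
      simp only [fA, eq_self_iff_true, and_true, true_and, or_true, true_or]
      split_ifs <;> omega
    have hf2 : fA n iv iv = 1 := by
      simp only [fA, eq_self_iff_true, and_true, true_and, or_true, true_or]
      split_ifs <;> omega
    rw [hf1, hf2, expA, depA]
    have e1 : (if iv = i0 then i0 - 2 else if iv = n-1 then n-3 else if iv < i0 then iv else iv - 1)
        = i0 - 2 := by split_ifs <;> omega
    have e2 : (if iv = i0 ∨ iv = n-1 then 1 else 0) = 1 := by split_ifs <;> omega
    rw [e1, e2]
    have e3 : n - (n - iv) - 1 - 1 = i0 - 2 := by omega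
    rw [e3]
    ring
  · rcases eq_or_ne iv (n-1) with hc2 | hc2
    · -- row n-1 : 3 * 2^(n-3)
      have hm1 : i0 ∈ Finset.Ico (n - iv) n := by simp [Finset.mem_Ico]; omega
      rw [← Finset.mul_prod_erase _ _ hm1]
      have hm2 : iv ∈ (Finset.Ico (n - iv) n).erase i0 := by
        simp [Finset.mem_erase, Finset.mem_Ico]; omega
      rw [← Finset.mul_prod_erase _ _ hm2]
      have h2 : ∏ j ∈ ((Finset.Ico (n - iv) n).erase i0).erase iv, fA n iv j
          = 2 ^ ((((Finset.Ico (n - iv) n).erase i0).erase iv).card) := by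
        apply prod_const_of'
        intro j hj
        simp only [Finset.mem_erase, Finset.mem_Ico] at hj
        simp only [fA, eq_self_iff_true, and_true, true_and, or_true, true_or]
        split_ifs <;> omega
      rw [h2, Finset.card_erase_of_mem hm2, Finset.card_erase_of_mem hm1, Nat.card_Ico]
      have hf1 : fA n iv i0 = 3 := by
        simp only [fA, eq_self_iff_true, and_true, true_and, or_true, true_or]
        split_ifs <;> omega
      have hf2 : fA n iv iv = 1 := by
        simp only [fA, eq_self_iff_true, and_true, true_and, or_true, true_or]
        split_ifs <;> omega
      rw [hf1, hf2, expA, depA]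
      have e1 : (if iv = i0 then i0 - 2 else if iv = n-1 then n-3 else if iv < i0 then iv else iv - 1)
          = n-3 := by split_ifs <;> omega
      have e2 : (if iv = i0 ∨ iv = n-1 then 1 else 0) = 1 := by split_ifs <;> omega
      rw [e1, e2]
      have e3 : n - (n - iv) - 1 - 1 = n - 3 := by omega
      rw [e3]
      ring
    · rcases lt_or_ge iv i0 with hc3 | hc3
      · -- small rows : 2^iv
        have h2 : ∏ j ∈ Finset.Ico (n - iv) n, fA n iv j
            = 2 ^ (Finset.Ico (n - iv) n).card := by
          apply prod_const_of'
          intro j hj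
          simp only [Finset.mem_Ico] at hj
          simp only [fA, eq_self_iff_true, and_true, true_and, or_true, true_or]
          split_ifs <;> omega
        rw [h2, Nat.card_Ico, expA, depA]
        have e1 : (if iv = i0 then i0 - 2 else if iv = n-1 then n-3 else if iv < i0 then iv else iv - 1)
            = iv := by split_ifs <;> omega
        have e2 : (if iv = i0 ∨ iv = n-1 then 1 else 0) = 0 := by split_ifs <;> omega
        rw [e1, e2]
        have e3 : n - (n - iv) = iv := by omega
        rw [e3]; ring
      · -- middle large rows : 2^(iv-1)
        have hm2 : iv ∈ Finset.Ico (n - iv) n := by simp [Finset.mem_Ico]; omega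
        rw [← Finset.mul_prod_erase _ _ hm2]
        have h2 : ∏ j ∈ (Finset.Ico (n - iv) n).erase iv, fA n iv j
            = 2 ^ (((Finset.Ico (n - iv) n).erase iv).card) := by
          apply prod_const_of'
          intro j hj
          simp only [Finset.mem_erase, Finset.mem_Ico] at hj
          simp only [fA, eq_self_iff_true, and_true, true_and, or_true, true_or]
          split_ifs <;> omega
        rw [h2, Finset.card_erase_of_mem hm2, Nat.card_Ico]
        have hf2 : fA n iv iv = 1 := by
          simp only [fA, eq_self_iff_true, and_true, true_and, or_true, true_or]
          split_ifs <;> omega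
        rw [hf2, expA, depA]
        have e1 : (if iv = i0 then i0 - 2 else if iv = n-1 then n-3 else if iv < i0 then iv else iv - 1)
            = iv - 1 := by split_ifs <;> omega
        have e2 : (if iv = i0 ∨ iv = n-1 then 1 else 0) = 0 := by split_ifs <;> omega
        rw [e1, e2]
        have e3 : n - (n - iv) - 1 = iv - 1 := by omega
        rw [e3]; ring

set_option linter.unnecessarySeqFocus false in
lemma prod_C (m : ℕ) (hm : 4 ≤ m) (i : Fin m) :
    rowProd (Mmat m 3 1 2) i = 2 ^ depC m (i:ℕ) * 3 ^ expC m (i:ℕ) := by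
  have hi : (i:ℕ) < m := i.isLt
  rw [rowProd, Finset.prod_filter]
  have key : ∀ j : Fin m, (if Mmat m 3 1 2 i j ≠ 0 then Mmat m 3 1 2 i j else 1)
      = fC m (i:ℕ) (j:ℕ) := by
    intro j
    simp only [Mmat, fC, Fin.ext_iff]
    split_ifs <;> omega
  simp only [key]
  rw [Fin.prod_univ_eq_prod_range (fC m (i:ℕ)) m, Finset.range_eq_Ico,
    ← Finset.prod_Ico_consecutive _ (Nat.zero_le (m - (i:ℕ))) (Nat.sub_le m (i:ℕ))]
  set iv := (i : ℕ) with hiv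
  set i0 := (m+1)/2 with hi0
  have hi0m : i0 < m - 1 := by omega
  -- first part
  have hfirst : ∏ j ∈ Finset.Ico 0 (m - iv), fC m iv j = 3 ^ expC m iv := by
    rcases lt_or_ge iv i0 with hc | hc
    · have hmem : iv ∈ Finset.Ico 0 (m - iv) := by simp [Finset.mem_Ico]; omega
      rw [← Finset.mul_prod_erase _ _ hmem]
      have h1 : fC m iv iv = 1 := by
        simp only [fC, eq_self_iff_true, and_true, true_and, or_true, true_or]
        split_ifs <;> omega
      have h2 : ∏ j ∈ (Finset.Ico 0 (m - iv)).erase iv, fC m iv j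
          = 3 ^ ((Finset.Ico 0 (m - iv)).erase iv).card := by
        apply prod_const_of'
        intro j hj
        simp only [Finset.mem_erase, Finset.mem_Ico] at hj
        simp only [fC, eq_self_iff_true, and_true, true_and, or_true, true_or]
        split_ifs <;> omega
      rw [h1, h2, Finset.card_erase_of_mem hmem, Nat.card_Ico]
      have e1 : expC m iv = m - iv - 0 - 1 := by simp only [expC]; split_ifs <;> omega
      rw [e1]; ring
    · have h2 : ∏ j ∈ Finset.Ico 0 (m - iv), fC m iv j
          = 3 ^ (Finset.Ico 0 (m - iv)).card := by
        apply prod_const_of'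
        intro j hj
        simp only [Finset.mem_Ico] at hj
        simp only [fC, eq_self_iff_true, and_true, true_and, or_true, true_or]
        split_ifs <;> omega
      rw [h2, Nat.card_Ico]
      have e1 : expC m iv = m - iv - 0 := by simp only [expC]; split_ifs <;> omega
      rw [e1]
  rw [hfirst]
  -- second part
  rcases eq_or_ne iv i0 with hc | hc
  · have hmem : m - 1 ∈ Finset.Ico (m - iv) m := by simp [Finset.mem_Ico]; omega
    rw [← Finset.mul_prod_erase _ _ hmem]
    have h1 : fC m iv (m-1) = 2 := by
      simp only [fC, eq_self_iff_true, and_true, true_and, or_true, true_or]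
      split_ifs <;> omega
    have h2 : ∏ j ∈ (Finset.Ico (m - iv) m).erase (m-1), fC m iv j = 1 := by
      apply Finset.prod_eq_one
      intro j hj
      simp only [Finset.mem_erase, Finset.mem_Ico] at hj
      simp only [fC, eq_self_iff_true, and_true, true_and, or_true, true_or]
      split_ifs <;> omega
    have e2 : depC m iv = 1 := by simp only [depC]; split_ifs <;> omega
    rw [h1, h2, e2]; ring
  · rcases eq_or_ne iv (m-1) with hc2 | hc2
    · have hmem : i0 ∈ Finset.Ico (m - iv) m := by simp [Finset.mem_Ico]; omega
      rw [← Finset.mul_prod_erase _ _ hmem]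
      have h1 : fC m iv i0 = 2 := by
        simp only [fC, eq_self_iff_true, and_true, true_and, or_true, true_or]
        split_ifs <;> omega
      have h2 : ∏ j ∈ (Finset.Ico (m - iv) m).erase i0, fC m iv j = 1 := by
        apply Finset.prod_eq_one
        intro j hj
        simp only [Finset.mem_erase, Finset.mem_Ico] at hj
        simp only [fC, eq_self_iff_true, and_true, true_and, or_true, true_or]
        split_ifs <;> omega
      have e2 : depC m iv = 1 := by simp only [depC]; split_ifs <;> omega
      rw [h1, h2, e2]; ring
    · have h2 : ∏ j ∈ Finset.Ico (m - iv) m, fC m iv j = 1 := by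
        apply Finset.prod_eq_one
        intro j hj
        simp only [Finset.mem_Ico] at hj
        simp only [fC, eq_self_iff_true, and_true, true_and, or_true, true_or]
        split_ifs <;> omega
      have e2 : depC m iv = 0 := by simp only [depC]; split_ifs <;> omega
      rw [h2, e2]; ring

/-- For every `n ≥ 7` and `m ≥ 4`, the direct sum `A_n ⊕ C_m` is product-irregular,
where `A_n = M_n(1,2,3)` and `C_m = M_m(3,1,2)`. -/
theorem stmt_14 (n m : ℕ) (hn : 7 ≤ n) (hm : 4 ≤ m) :
    MatPI (Matrix.fromBlocks (Mmat n 1 2 3) 0 0 (Mmat m 3 1 2)) := by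
  intro a b hab
  match a, b with
  | Sum.inl i, Sum.inl j =>
    rw [rowProd_inl, rowProd_inl, prod_A n hn i, prod_A n hn j] at hab
    obtain ⟨h1, h2⟩ := pow23 hab
    have hi : (i:ℕ) < n := i.isLt
    have hj : (j:ℕ) < n := j.isLt
    have : (i:ℕ) = (j:ℕ) := by
      simp only [expA, depA] at h1 h2
      split_ifs at h1 h2 <;> omega
    exact congrArg Sum.inl (Fin.ext this)
  | Sum.inl i, Sum.inr j =>
    exfalso
    rw [rowProd_inl, rowProd_inr, prod_A n hn i, prod_C m hm j] at hab
    obtain ⟨h1, h2⟩ := pow23 hab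
    have hi : (i:ℕ) < n := i.isLt
    have hj : (j:ℕ) < m := j.isLt
    simp only [expA, depA, expC, depC] at h1 h2
    split_ifs at h1 h2 <;> omega
  | Sum.inr i, Sum.inl j =>
    exfalso
    rw [rowProd_inr, rowProd_inl, prod_C m hm i, prod_A n hn j] at hab
    obtain ⟨h1, h2⟩ := pow23 hab
    have hi : (i:ℕ) < m := i.isLt
    have hj : (j:ℕ) < n := j.isLt
    simp only [expA, depA, expC, depC] at h1 h2
    split_ifs at h1 h2 <;> omega
  | Sum.inr i, Sum.inr j =>
    rw [rowProd_inr, rowProd_inr, prod_C m hm i, prod_C m hm j] at hab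
    obtain ⟨h1, h2⟩ := pow23 hab
    have hi : (i:ℕ) < m := i.isLt
    have hj : (j:ℕ) < m := j.isLt
    have : (i:ℕ) = (j:ℕ) := by
      simp only [expC, depC] at h1 h2
      split_ifs at h1 h2 <;> omega
    exact congrArg Sum.inr (Fin.ext this)
end
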